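/- The LPT (longest processing time first) scheduling algorithm, which sorts n jobs with sizes s₁ ≥ s₂ ≥ … ≥ s_n and assigns each job in this order to the currently least loaded of P identical machines, produces a schedule whose makespan is at most 4/3 − 1/(3P) times the optimal makespan. -/
import Mathlib


open Finset

/-- The load of machine `m` under assignment `A` of jobs with sizes `s`. -/
def machineLoad {n P : ℕ} (s : Fin n → ℝ) (A : Fin n → Fin P) (m : Fin P) : ℝ :=
  ∑ j, if A j = m then s j else 0

/-- The load of machine `m` from the jobs preceding job `j`. -/
def partialLoad {n P : ℕ} (s : Fin n → ℝ) (A : Fin n → Fin P) (j : Fin n) (m : Fin P) : ℝ :=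
  ∑ i ∈ Finset.univ.filter (fun i => i < j), if A i = m then s i else 0

section Aux

variable {n P : ℕ} {s : Fin n → ℝ}

lemma machineLoad_nonneg (hs : ∀ i, 0 ≤ s i) (A : Fin n → Fin P) (m : Fin P) :
    0 ≤ machineLoad s A m :=
  Finset.sum_nonneg fun j _ => by by_cases h : A j = m <;> simp [h, hs j]

lemma partialLoad_nonneg (hs : ∀ i, 0 ≤ s i) (A : Fin n → Fin P) (j : Fin n) (m : Fin P) :
    0 ≤ partialLoad s A j m :=
  Finset.sum_nonneg fun i _ => by by_cases h : A i = m <;> simp [h, hs i]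

lemma sum_machineLoad [NeZero P] (B : Fin n → Fin P) :
    ∑ m, machineLoad s B m = ∑ j, s j := by
  unfold machineLoad
  rw [Finset.sum_comm]
  refine Finset.sum_congr rfl fun j _ => ?_
  simp [Finset.sum_ite_eq', Finset.mem_univ]

lemma sum_partialLoad [NeZero P] (A : Fin n → Fin P) (b : Fin n) :
    ∑ m, partialLoad s A b m = ∑ i ∈ Finset.univ.filter (fun i => i < b), s i := by
  unfold partialLoad
  rw [Finset.sum_comm]
  refine Finset.sum_congr rfl fun j _ => ?_
  simp [Finset.sum_ite_eq', Finset.mem_univ]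

lemma sum_le_machineLoad (hs : ∀ i, 0 ≤ s i) (B : Fin n → Fin P) (m : Fin P)
    (F : Finset (Fin n)) (hF : ∀ j ∈ F, B j = m) :
    ∑ j ∈ F, s j ≤ machineLoad s B m := by
  have h1 : ∑ j ∈ F, s j = ∑ j ∈ F, if B j = m then s j else 0 :=
    Finset.sum_congr rfl fun j hj => by simp [hF j hj]
  rw [h1, machineLoad]
  exact Finset.sum_le_sum_of_subset_of_nonneg (Finset.subset_univ F)
    (fun i _ _ => by by_cases h : B i = m <;> simp [h, hs i])

end Aux

/-- LPT scheduling: if the job sizes are sorted in nonincreasing order and each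
job is assigned to the currently least loaded of the `P` machines, then the
makespan is at most `4/3 − 1/(3P)` times the optimal makespan. -/
theorem lpt_makespan_bound {n P : ℕ} [NeZero P] (s : Fin n → ℝ)
    (hs : ∀ i, 0 ≤ s i) (hsorted : ∀ i j : Fin n, i ≤ j → s j ≤ s i)
    (A : Fin n → Fin P)
    (hgreedy : ∀ j : Fin n, ∀ m : Fin P, partialLoad s A j (A j) ≤ partialLoad s A j m) :
    (⨆ m : Fin P, machineLoad s A m) ≤
      (4 / 3 - 1 / (3 * P)) * ⨅ B : Fin n → Fin P, ⨆ m : Fin P, machineLoad s B m := by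
  haveI hne : Nonempty (Fin P) := ⟨⟨0, Nat.pos_of_ne_zero (NeZero.ne P)⟩⟩
  set c : ℝ := 4 / 3 - 1 / (3 * P) with hc
  obtain ⟨B₀, hB₀⟩ := Finite.exists_min (fun B : Fin n → Fin P => ⨆ m, machineLoad s B m)
  set T := ⨆ m, machineLoad s B₀ m with hTdef
  have hinf : (⨅ B : Fin n → Fin P, ⨆ m : Fin P, machineLoad s B m) = T :=
    le_antisymm (ciInf_le (Set.finite_range _).bddBelow B₀) (le_ciInf hB₀)
  rw [hinf]
  have hloadT : ∀ m, machineLoad s B₀ m ≤ T := fun m =>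
    le_ciSup (Set.finite_range _).bddAbove m
  have hT0 : 0 ≤ T :=
    le_trans (machineLoad_nonneg hs B₀ (Classical.arbitrary _)) (hloadT _)
  have hPpos : (0 : ℝ) < P := by
    exact_mod_cast Nat.pos_of_ne_zero (NeZero.ne P)
  have hP1 : (1 : ℝ) ≤ P := by
    exact_mod_cast Nat.one_le_iff_ne_zero.mpr (NeZero.ne P)
  have hc1 : 1 ≤ c := by
    rw [hc]
    have h1 : 1 / (3 * (P : ℝ)) ≤ 1 / 3 := by
      rw [div_le_div_iff₀ (by positivity) (by norm_num)]
      nlinarith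
    linarith
  refine ciSup_le fun mstar => ?_
  by_cases hF : (Finset.univ.filter (fun j : Fin n => A j = mstar)).Nonempty
  · -- there is a job on machine mstar; let b be the last one
    set F := Finset.univ.filter (fun j : Fin n => A j = mstar) with hFdef
    set b := F.max' hF with hbdef
    have hbmem : A b = mstar := (Finset.mem_filter.mp (F.max'_mem hF)).2
    set L := partialLoad s A b mstar with hLdef
    -- the load of mstar is L + s b
    have hM : machineLoad s A mstar = L + s b := by
      have h3 : ∀ i ∈ Finset.univ.filter (fun i : Fin n => ¬ i < b), i ≠ b →
          (if A i = mstar then s i else 0) = 0 := by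
        intro i hi hib
        have hbi : ¬ i < b := (Finset.mem_filter.mp hi).2
        have hAi : A i ≠ mstar := by
          intro hAi
          have hiF : i ∈ F := by simp [hFdef, hAi]
          exact hib (le_antisymm (F.le_max' i hiF) (not_lt.mp hbi))
        simp [hAi]
      have h2 : (∑ i ∈ Finset.univ.filter (fun i : Fin n => ¬ i < b),
          if A i = mstar then s i else 0) = s b := by
        rw [Finset.sum_eq_single_of_mem b
          (Finset.mem_filter.mpr ⟨Finset.mem_univ b, lt_irrefl b⟩) h3, if_pos hbmem]
      rw [machineLoad, ← Finset.sum_filter_add_sum_filter_not Finset.univ (fun i => i < b), h2]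
      rfl
    -- L is the minimum partial load
    have hLmin : ∀ m, L ≤ partialLoad s A b m := by
      intro m
      have := hgreedy b m
      rwa [hbmem] at this
    have hL0 : 0 ≤ L := partialLoad_nonneg hs A b mstar
    -- total size bound
    have htot : ∑ j, s j ≤ P * T := by
      rw [← sum_machineLoad B₀]
      calc ∑ m, machineLoad s B₀ m ≤ ∑ _m : Fin P, T := Finset.sum_le_sum fun m _ => hloadT m
        _ = P * T := by simp [mul_comm]
    have hsbT : s b ≤ T := by
      have h1 : s b ≤ machineLoad s B₀ (B₀ b) := by
        have := sum_le_machineLoad hs B₀ (B₀ b) {b} (by simp)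
        simpa using this
      exact h1.trans (hloadT _)
    -- P * L ≤ sum of jobs before b ≤ total - s b
    have hPL : (P : ℝ) * L ≤ (∑ j, s j) - s b := by
      have h1 : (P : ℝ) * L = ∑ _m : Fin P, L := by simp [mul_comm]
      have h2 : ∑ _m : Fin P, L ≤ ∑ m, partialLoad s A b m :=
        Finset.sum_le_sum fun m _ => hLmin m
      have h3 : ∑ m, partialLoad s A b m = ∑ i ∈ Finset.univ.filter (fun i => i < b), s i :=
        sum_partialLoad A b
      have h4 : ∑ i ∈ Finset.univ.filter (fun i => i < b), s i ≤ (∑ j, s j) - s b := by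
        have h5 : ∑ i ∈ Finset.univ.filter (fun i => i < b), s i
            + ∑ i ∈ Finset.univ.filter (fun i => ¬ i < b), s i = ∑ j, s j :=
          Finset.sum_filter_add_sum_filter_not _ _ _
        have h6 : s b ≤ ∑ i ∈ Finset.univ.filter (fun i => ¬ i < b), s i :=
          Finset.single_le_sum (fun i _ => hs i) (by simp)
        linarith
      linarith [h1 ▸ h2.trans (h3 ▸ h4)]
    by_cases hcase : s b ≤ T / 3
    · -- easy case
      rw [hM]
      have hkey : (P : ℝ) * (L + s b) ≤ P * T + (P - 1) * s b := by nlinarith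
      have hcTP : (P : ℝ) * (c * T) = P * T + (P - 1) * (T / 3) := by
        rw [hc]
        field_simp
        ring
      have h7 : ((P : ℝ) - 1) * s b ≤ (P - 1) * (T / 3) :=
        mul_le_mul_of_nonneg_left hcase (by linarith)
      have h8 : (P : ℝ) * (L + s b) ≤ P * (c * T) := by rw [hcTP]; linarith
      exact le_of_mul_le_mul_left h8 hPpos
    · -- hard case : s b > T/3 ; show the load is ≤ T
      push_neg at hcase
      have hT3 : T / 3 < s b := hcase
      suffices hMT : machineLoad s A mstar ≤ T by nlinarith
      by_contra hMgt
      push_neg at hMgt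
      rw [hM] at hMgt
      -- sets of jobs
      set S : Finset (Fin n) := Finset.univ.filter (fun i => i ≤ b) with hSdef
      set S' : Finset (Fin n) := Finset.univ.filter (fun i => i < b) with hS'def
      set K : Finset (Fin n) := S.filter (fun i => T - s b < s i) with hKdef
      set K' : Finset (Fin n) := K.filter (fun i => i < b) with hK'def
      have hsS : ∀ i ∈ S, s b ≤ s i := fun i hi =>
        hsorted i b (by simpa [hSdef] using hi)
      have hKS : K ⊆ S := Finset.filter_subset _ _
      have hK'K : K' ⊆ K := Finset.filter_subset _ _
      have hbS' : b ∉ S' := by simp [hS'def]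
      have hScard : S.card = S'.card + 1 := by
        have : S = insert b S' := by
          ext i
          simp only [hSdef, hS'def, Finset.mem_insert, Finset.mem_filter, Finset.mem_univ,
            true_and]
          constructor
          · intro h; rcases eq_or_lt_of_le h with h' | h'
            · exact Or.inl h'
            · exact Or.inr h'
          · rintro (rfl | h); · exact le_refl _
            · exact le_of_lt h
        rw [this, Finset.card_insert_of_notMem hbS']
      -- the counting bound under the optimal assignment B₀
      have hfib2 : ∀ m : Fin P,
          (S.filter (fun i => B₀ i = m)).card + (K.filter (fun i => B₀ i = m)).card ≤ 2 := by
        intro m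
        set Sm := S.filter (fun i => B₀ i = m) with hSm
        set Km := K.filter (fun i => B₀ i = m) with hKm
        have hKmSm : Km ⊆ Sm := Finset.filter_subset_filter _ hKS
        by_cases hKne : Km.Nonempty
        · obtain ⟨k, hk⟩ := hKne
          have hkK : k ∈ K := (Finset.mem_filter.mp hk).1
          have hkm : B₀ k = m := (Finset.mem_filter.mp hk).2
          have hkbig : T - s b < s k := (Finset.mem_filter.mp hkK).2
          have hSm1 : Sm.card ≤ 1 := by
            by_contra h
            push_neg at h
            obtain ⟨x, hx, y, hy, hxy⟩ := Finset.one_lt_card.mp h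
            -- pick z ∈ Sm with z ≠ k
            have hz : ∃ z ∈ Sm, z ≠ k := by
              by_cases hxk : x = k
              · exact ⟨y, hy, fun h => hxy (hxk.trans h.symm)⟩
              · exact ⟨x, hx, hxk⟩
            obtain ⟨z, hzSm, hzk⟩ := hz
            have hzS : z ∈ S := (Finset.mem_filter.mp hzSm).1
            have hzm : B₀ z = m := (Finset.mem_filter.mp hzSm).2
            have hpair : s k + s z ≤ machineLoad s B₀ m := by
              have := sum_le_machineLoad hs B₀ m {k, z} (by
                intro j hj
                rcases Finset.mem_insert.mp hj with rfl | hj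
                · exact hkm
                · rw [Finset.mem_singleton.mp hj]; exact hzm)
              rwa [Finset.sum_pair (by exact fun h => hzk h.symm)] at this
            have : T < s k + s z := by
              have := hsS z hzS
              linarith
            linarith [hloadT m]
          have : Km.card ≤ Sm.card := Finset.card_le_card hKmSm
          omega
        · rw [Finset.not_nonempty_iff_eq_empty] at hKne
          rw [hKne, Finset.card_empty]
          have hSm2 : Sm.card ≤ 2 := by
            by_contra h
            push_neg at h
            obtain ⟨x, y, z, hx, hy, hz, hxy, hxz, hyz⟩ := Finset.two_lt_card_iff.mp h
            have hxS : x ∈ S := (Finset.mem_filter.mp hx).1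
            have hyS : y ∈ S := (Finset.mem_filter.mp hy).1
            have hzS : z ∈ S := (Finset.mem_filter.mp hz).1
            have htriple : s x + s y + s z ≤ machineLoad s B₀ m := by
              have := sum_le_machineLoad hs B₀ m {x, y, z} (by
                intro j hj
                simp only [Finset.mem_insert, Finset.mem_singleton] at hj
                rcases hj with rfl | rfl | rfl
                · exact (Finset.mem_filter.mp hx).2
                · exact (Finset.mem_filter.mp hy).2
                · exact (Finset.mem_filter.mp hz).2)
              rwa [Finset.sum_insert (by simp [hxy, hxz]),
                Finset.sum_pair hyz, ← add_assoc] at this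
            have h1 := hsS x hxS
            have h2 := hsS y hyS
            have h3 := hsS z hzS
            have : T < s x + s y + s z := by linarith
            linarith [hloadT m]
          omega
      have hcount : S.card + K.card ≤ 2 * P := by
        have h1 : S.card = ∑ m : Fin P, (S.filter (fun i => B₀ i = m)).card :=
          Finset.card_eq_sum_card_fiberwise fun x _ => Finset.mem_univ (B₀ x)
        have h2 : K.card = ∑ m : Fin P, (K.filter (fun i => B₀ i = m)).card :=
          Finset.card_eq_sum_card_fiberwise fun x _ => Finset.mem_univ (B₀ x)
        calc S.card + K.card
            = ∑ m : Fin P, ((S.filter (fun i => B₀ i = m)).card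
              + (K.filter (fun i => B₀ i = m)).card) := by
              rw [h1, h2, Finset.sum_add_distrib]
          _ ≤ ∑ _m : Fin P, 2 := Finset.sum_le_sum fun m _ => hfib2 m
          _ = 2 * P := by simp [mul_comm]
      -- pigeonhole on the greedy assignment: some machine avoids K' and has ≤ 1 job before b
      have hmain : ∃ m' : Fin P, (∀ k ∈ K', A k ≠ m')
          ∧ (S'.filter (fun i => A i = m')).card ≤ 1 := by
        by_contra h
        push_neg at h
        have hlow : ∀ m : Fin P,
            2 ≤ (S'.filter (fun i => A i = m)).card + (K'.filter (fun i => A i = m)).card := by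
          intro m
          by_cases hk : ∃ k ∈ K', A k = m
          · obtain ⟨k, hkK', hkm⟩ := hk
            have h1 : k ∈ K'.filter (fun i => A i = m) := Finset.mem_filter.mpr ⟨hkK', hkm⟩
            have h2 : k ∈ S'.filter (fun i => A i = m) := by
              refine Finset.mem_filter.mpr ⟨?_, hkm⟩
              have : k < b := (Finset.mem_filter.mp hkK').2
              simp [hS'def, this]
            have c1 : 1 ≤ (K'.filter (fun i => A i = m)).card := Finset.card_pos.mpr ⟨k, h1⟩
            have c2 : 1 ≤ (S'.filter (fun i => A i = m)).card := Finset.card_pos.mpr ⟨k, h2⟩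
            omega
          · push_neg at hk
            have := h m hk
            omega
        have hge : 2 * P ≤ S'.card + K'.card := by
          have h1 : S'.card = ∑ m : Fin P, (S'.filter (fun i => A i = m)).card :=
            Finset.card_eq_sum_card_fiberwise fun x _ => Finset.mem_univ (A x)
          have h2 : K'.card = ∑ m : Fin P, (K'.filter (fun i => A i = m)).card :=
            Finset.card_eq_sum_card_fiberwise fun x _ => Finset.mem_univ (A x)
          calc 2 * P = ∑ _m : Fin P, 2 := by simp [mul_comm]
            _ ≤ ∑ m : Fin P, ((S'.filter (fun i => A i = m)).card
                + (K'.filter (fun i => A i = m)).card) := Finset.sum_le_sum fun m _ => hlow m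
            _ = S'.card + K'.card := by rw [h1, h2, Finset.sum_add_distrib]
        have : K'.card ≤ K.card := Finset.card_le_card hK'K
        omega
      obtain ⟨m', hm'K, hm'card⟩ := hmain
      -- the load of m' before b bounds L
      have hLm' : L ≤ ∑ i ∈ S'.filter (fun i => A i = m'), s i := by
        have h1 := hLmin m'
        rw [partialLoad] at h1
        rw [Finset.sum_filter]
        exact h1
      interval_cases hcard : (S'.filter (fun i => A i = m')).card
      · -- empty: L ≤ 0 so M = s b ≤ T, contradiction
        rw [Finset.card_eq_zero] at hcard
        rw [hcard, Finset.sum_empty] at hLm'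
        have : L = 0 := le_antisymm hLm' hL0
        rw [this] at hMgt
        linarith
      · -- a single job x, x ∉ K, so s x ≤ T - s b
        rw [Finset.card_eq_one] at hcard
        obtain ⟨x, hx⟩ := hcard
        rw [hx, Finset.sum_singleton] at hLm'
        have hxmem : x ∈ S'.filter (fun i => A i = m') := by rw [hx]; exact Finset.mem_singleton_self x
        have hxS' : x ∈ S' := (Finset.mem_filter.mp hxmem).1
        have hxm' : A x = m' := (Finset.mem_filter.mp hxmem).2
        have hxb : x < b := by simpa [hS'def] using hxS'
        have hxnK : x ∉ K := by
          intro hxK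
          have hxK' : x ∈ K' := Finset.mem_filter.mpr ⟨hxK, hxb⟩
          exact hm'K x hxK' hxm'
        have hxsmall : s x ≤ T - s b := by
          by_contra h
          push_neg at h
          have hxS : x ∈ S := by simp [hSdef, le_of_lt hxb]
          exact hxnK (Finset.mem_filter.mpr ⟨hxS, h⟩)
        linarith
  · -- no job on mstar: load is 0
    have hzero : machineLoad s A mstar = 0 := by
      rw [machineLoad]
      refine Finset.sum_eq_zero fun j _ => ?_
      have : A j ≠ mstar := by
        intro h
        exact hF ⟨j, by simp [h]⟩
      simp [this]
    rw [hzero]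
    have : (0:ℝ) ≤ c := by linarith
    exact mul_nonneg this hT0
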